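/- In an alternating square PQRS of the pants graph, opposite vertices differ by exactly two curves, and the square is determined by its three vertices P, Q, R: if P = {α₁, α₂, α₃,...,αₙ}, Q = {α₁, α₂', α₃,...,αₙ}, R = {α₁', α₂', α₃,...,αₙ}, then necessarily S = {α₁', α₂, α₃,...,αₙ}. -/
import Mathlib


open scoped Classical

/-- An abstract model of the pants graph data of a surface `S`: the isotopy
classes of essential non-peripheral simple closed curves with geometric
intersection number, the number `n = 3g - 3 + r` of curves in a pants
decomposition, and the predicate of being a pants decomposition. -/
structure PantsGraphModel where
  Curve : Type
  inter : Curve → Curve → ℕ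
  inter_symm : ∀ a b, inter a b = inter b a
  n : ℕ
  IsPants : Finset Curve → Prop
  pants_card : ∀ P, IsPants P → P.card = n
  pants_disjoint : ∀ P, IsPants P → ∀ a ∈ P, ∀ b ∈ P, a ≠ b → inter a b = 0

/-- An elementary move between two pants decompositions: they share `n - 1`
curves and the two exchanged curves intersect (minimally). This is the edge
relation of the pants graph. -/
def ElemMove (M : PantsGraphModel) (P Q : Finset M.Curve) : Prop :=
  M.IsPants P ∧ M.IsPants Q ∧ P ≠ Q ∧ (P ∩ Q).card = M.n - 1 ∧
    ∀ a ∈ P \ Q, ∀ b ∈ Q \ P, 0 < M.inter a b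

/-- Three consecutive vertices of a loop are alternating if the corresponding
pants decompositions do not share `n - 1` common curves (equivalently, the two
edges do not lie in a common Farey graph of the pants graph). -/
def AltTriple (M : PantsGraphModel) (P Q R : Finset M.Curve) : Prop :=
  (P ∩ Q ∩ R).card < M.n - 1

/-- An alternating square: a 4-cycle in the pants graph, no three consecutive
vertices of which share `n - 1` curves. -/
def IsAltSquare (M : PantsGraphModel) (P Q R S : Finset M.Curve) : Prop :=
  ElemMove M P Q ∧ ElemMove M Q R ∧ ElemMove M R S ∧ ElemMove M S P ∧
  AltTriple M P Q R ∧ AltTriple M Q R S ∧ AltTriple M R S P ∧ AltTriple M S P Q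


private lemma exists_sdiff_singleton {α : Type*} [DecidableEq α] {s t : Finset α} {n : ℕ}
    (hs : s.card = n) (hi : (s ∩ t).card = n - 1) (hn : 2 ≤ n) : ∃ a, s \ t = {a} := by
  apply Finset.card_eq_one.mp
  have h := Finset.card_sdiff_add_card_inter s t
  omega

private lemma sdiff_singleton_elim {α : Type*} [DecidableEq α] {s t : Finset α} {a : α}
    (h : s \ t = {a}) :
    a ∈ s \ t ∧ a ∈ s ∧ a ∉ t ∧ ∀ z ∈ s, z ∉ t → z = a := by
  have h1 : a ∈ s \ t := by rw [h]; exact Finset.mem_singleton_self a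
  have h2 := Finset.mem_sdiff.mp h1
  refine ⟨h1, h2.1, h2.2, fun z hz hz' => ?_⟩
  have : z ∈ s \ t := Finset.mem_sdiff.mpr ⟨hz, hz'⟩
  rw [h] at this
  exact Finset.mem_singleton.mp this

/-- in an alternating square `PQRS` of the pants graph, opposite
vertices differ by exactly two curves, and the fourth vertex is determined by
the other three: if `P = {α₁, α₂, α₃, …, αₙ}`, `Q = {α₁, α₂', α₃, …, αₙ}`,
`R = {α₁', α₂', α₃, …, αₙ}`, then `S = {α₁', α₂, α₃, …, αₙ}`, i.e.
`S = (P \ Q) ∪ (R \ Q) ∪ (P ∩ Q ∩ R)`. -/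
theorem alternating_square_structure (M : PantsGraphModel)
    (P Q R S : Finset M.Curve) (h : IsAltSquare M P Q R S) :
    (P ∩ R).card = M.n - 2 ∧ (Q ∩ S).card = M.n - 2 ∧
      S = (P \ Q) ∪ (R \ Q) ∪ (P ∩ Q ∩ R) := by
  classical
  obtain ⟨epq, eqr, ers, esp, apqr, aqrs, arsp, aspq⟩ := h
  obtain ⟨hP, hQ, -, hPQ, posPQ⟩ := epq
  obtain ⟨-, hR, -, hQR, posQR⟩ := eqr
  obtain ⟨-, hS, -, hRS, posRS⟩ := ers
  obtain ⟨-, -, -, hSP, posSP⟩ := esp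
  have cP := M.pants_card P hP
  have cQ := M.pants_card Q hQ
  have cR := M.pants_card R hR
  have cS := M.pants_card S hS
  have apqr' : (P ∩ Q ∩ R).card < M.n - 1 := apqr
  have aqrs' : (Q ∩ R ∩ S).card < M.n - 1 := aqrs
  have hn2 : 2 ≤ M.n := by omega
  obtain ⟨a, ha⟩ := exists_sdiff_singleton cP hPQ hn2
  obtain ⟨b, hb⟩ := exists_sdiff_singleton cQ (by rwa [Finset.inter_comm]) hn2
  obtain ⟨b2, hb2⟩ := exists_sdiff_singleton cQ hQR hn2
  obtain ⟨c, hc⟩ := exists_sdiff_singleton cR (by rwa [Finset.inter_comm]) hn2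
  obtain ⟨x, hx⟩ := exists_sdiff_singleton cR hRS hn2
  obtain ⟨y, hy⟩ := exists_sdiff_singleton cS (by rwa [Finset.inter_comm]) hn2
  obtain ⟨hamem, haP, haQ, ua⟩ := sdiff_singleton_elim ha
  obtain ⟨hbmem, hbQ, hbP, ub⟩ := sdiff_singleton_elim hb
  obtain ⟨hb2mem, hb2Q, hb2R, ub2⟩ := sdiff_singleton_elim hb2
  obtain ⟨hcmem, hcR, hcQ, uc⟩ := sdiff_singleton_elim hc
  obtain ⟨hxmem, hxR, hxS, ux⟩ := sdiff_singleton_elim hx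
  obtain ⟨hymem, hyS, hyR, uy⟩ := sdiff_singleton_elim hy
  -- b ≠ b2
  have hbb2 : b ≠ b2 := by
    intro hbe
    have hsub : P ∩ Q ⊆ R := by
      intro z hz
      obtain ⟨hzP, hzQ⟩ := Finset.mem_inter.mp hz
      by_contra hzR
      have hzb : z = b2 := ub2 z hzQ hzR
      rw [← hbe] at hzb
      exact hbP (hzb ▸ hzP)
    have he : P ∩ Q ∩ R = P ∩ Q := Finset.inter_eq_left.mpr hsub
    rw [he, hPQ] at apqr'
    omega
  have hb2P : b2 ∈ P := by
    by_contra h'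
    exact hbb2 (ub b2 hb2Q h').symm
  have hbR : b ∈ R := by
    by_contra h'
    exact hbb2 (ub2 b hbQ h')
  have hac : a ≠ c := by
    intro he
    have h1 : 0 < M.inter a b := posPQ a hamem b hbmem
    have h2 : M.inter a b = 0 :=
      M.pants_disjoint R hR a (he ▸ hcR) b hbR (fun h => haQ (h ▸ hbQ))
    omega
  have hcP : c ∉ P := fun h' => hac (ua c h' hcQ).symm
  -- P ∩ R = P ∩ Q ∩ R
  have hPR : P ∩ R = P ∩ Q ∩ R := by
    ext z
    simp only [Finset.mem_inter]
    constructor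
    · rintro ⟨hzP, hzR⟩
      refine ⟨⟨hzP, ?_⟩, hzR⟩
      by_contra hzQ
      exact hac ((ua z hzP hzQ).symm.trans (uc z hzR hzQ))
    · rintro ⟨⟨h1, -⟩, h2⟩
      exact ⟨h1, h2⟩
  have hb2W : b2 ∉ P ∩ Q ∩ R := by
    intro h'
    exact hb2R (Finset.mem_inter.mp h').2
  have hWins : insert b2 (P ∩ Q ∩ R) = P ∩ Q := by
    ext z
    simp only [Finset.mem_insert, Finset.mem_inter]
    constructor
    · rintro (rfl | ⟨⟨h1, h2⟩, -⟩)
      · exact ⟨hb2P, hb2Q⟩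
      · exact ⟨h1, h2⟩
    · rintro ⟨hzP, hzQ⟩
      by_cases hzR : z ∈ R
      · exact Or.inr ⟨⟨hzP, hzQ⟩, hzR⟩
      · exact Or.inl (ub2 z hzQ hzR)
  have hWcard : (P ∩ Q ∩ R).card = M.n - 2 := by
    have hc1 : (insert b2 (P ∩ Q ∩ R)).card = (P ∩ Q ∩ R).card + 1 :=
      Finset.card_insert_of_notMem hb2W
    rw [hWins, hPQ] at hc1
    omega
  -- facts about x and y
  have hxQ : x ∈ Q := by
    by_contra hxQ
    have hxc : x = c := uc x hxR hxQ
    have hsub : Q ∩ R ⊆ S := by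
      intro z hz
      obtain ⟨hzQ, hzR⟩ := Finset.mem_inter.mp hz
      by_contra hzS
      have hzx : z = x := ux z hzR hzS
      exact hxQ (hzx ▸ hzQ)
    have he : Q ∩ R ∩ S = Q ∩ R := Finset.inter_eq_left.mpr hsub
    rw [he, hQR] at aqrs'
    omega
  have hxP : x ∉ P := by
    intro hxP
    have hxW : x ∈ P ∩ Q ∩ R :=
      Finset.mem_inter.mpr ⟨Finset.mem_inter.mpr ⟨hxP, hxQ⟩, hxR⟩
    have hsub : S ∩ P ⊆ insert y ((P ∩ Q ∩ R).erase x) := by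
      intro z hz
      obtain ⟨hzS, hzP⟩ := Finset.mem_inter.mp hz
      by_cases hzy : z = y
      · exact Finset.mem_insert.mpr (Or.inl hzy)
      · have hzR : z ∈ R := by
          by_contra h'
          exact hzy (uy z hzS h')
        have hzQ : z ∈ Q := by
          by_contra h'
          exact hac ((ua z hzP h').symm.trans (uc z hzR h'))
        refine Finset.mem_insert.mpr (Or.inr (Finset.mem_erase.mpr ⟨?_, ?_⟩))
        · intro h'
          exact hxS (h' ▸ hzS)
        · exact Finset.mem_inter.mpr ⟨Finset.mem_inter.mpr ⟨hzP, hzQ⟩, hzR⟩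
    have hle := Finset.card_le_card hsub
    have h1 := Finset.card_insert_le y ((P ∩ Q ∩ R).erase x)
    have h2 : ((P ∩ Q ∩ R).erase x).card = (P ∩ Q ∩ R).card - 1 :=
      Finset.card_erase_of_mem hxW
    have h3 : 0 < (P ∩ Q ∩ R).card := Finset.card_pos.mpr ⟨x, hxW⟩
    rw [hSP] at hle
    omega
  have hxb : x = b := ub x hxQ hxP
  have hyP : y ∈ P := by
    by_contra hyP
    have hsub : S ∩ P ⊆ P ∩ Q ∩ R := by
      intro z hz
      obtain ⟨hzS, hzP⟩ := Finset.mem_inter.mp hz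
      have hzy : z ≠ y := fun h' => hyP (h' ▸ hzP)
      have hzR : z ∈ R := by
        by_contra h'
        exact hzy (uy z hzS h')
      have hzQ : z ∈ Q := by
        by_contra h'
        exact hac ((ua z hzP h').symm.trans (uc z hzR h'))
      exact Finset.mem_inter.mpr ⟨Finset.mem_inter.mpr ⟨hzP, hzQ⟩, hzR⟩
    have hle := Finset.card_le_card hsub
    rw [hSP] at hle
    omega
  have hyQ : y ∉ Q := by
    intro hyQ
    have h1 : 0 < M.inter x y := posRS x hxmem y hymem
    have h2 : M.inter x y = 0 :=
      M.pants_disjoint Q hQ x hxQ y hyQ (fun h' => hxS (h' ▸ hyS))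
    omega
  have hya : y = a := ua y hyP hyQ
  -- the structure of S
  have hSeq : S = {a} ∪ {c} ∪ (P ∩ Q ∩ R) := by
    ext z
    simp only [Finset.mem_union, Finset.mem_singleton]
    constructor
    · intro hzS
      by_cases hzy : z = y
      · exact Or.inl (Or.inl (hzy.trans hya))
      · have hzR : z ∈ R := by
          by_contra h'
          exact hzy (uy z hzS h')
        have hzx : z ≠ x := fun h' => hxS (h' ▸ hzS)
        by_cases hzQ : z ∈ Q
        · have hzP : z ∈ P := by
            by_contra h'
            exact hzx ((ub z hzQ h').trans hxb.symm)
          exact Or.inr (Finset.mem_inter.mpr ⟨Finset.mem_inter.mpr ⟨hzP, hzQ⟩, hzR⟩)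
        · exact Or.inl (Or.inr (uc z hzR hzQ))
    · rintro ((hz | hz) | hzW)
      · rw [hz, ← hya]; exact hyS
      · rw [hz]
        by_contra h'
        have hcx : c = x := ux c hcR h'
        exact hcQ ((hcx.trans hxb) ▸ hbQ)
      · have hzR : z ∈ R := (Finset.mem_inter.mp hzW).2
        have hzP : z ∈ P := (Finset.mem_inter.mp (Finset.mem_inter.mp hzW).1).1
        by_contra h'
        have hzx : z = x := ux z hzR h'
        exact hbP ((hzx.trans hxb) ▸ hzP)
  have hQS : Q ∩ S = P ∩ Q ∩ R := by
    rw [hSeq]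
    ext z
    simp only [Finset.mem_inter, Finset.mem_union, Finset.mem_singleton]
    constructor
    · rintro ⟨hzQ, (hz | hz) | hzW⟩
      · exact absurd (hz ▸ hzQ) haQ
      · exact absurd (hz ▸ hzQ) hcQ
      · exact hzW
    · intro hzW
      exact ⟨hzW.1.2, Or.inr hzW⟩
  refine ⟨?_, ?_, ?_⟩
  · rw [hPR]; exact hWcard
  · have : (Q ∩ S).card = (P ∩ Q ∩ R).card := by rw [hQS]
    rw [this]; exact hWcard
  · rw [ha, hc]; exact hSeq
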